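/- Let A be a cellular algebra over an integral domain R with cell datum (A, *, Γ, ≥, T, C). Then A is cyclic cellular (every cell module is a cyclic A-module) if and only if for each γ ∈ Γ there exists y_γ ∈ A^γ with: (a) y_γ ≡ y_γ* mod Ā^γ; (b) A^γ = A y_γ A + Ā^γ; and (c) (A y_γ + Ā^γ)/Ā^γ ≅ Δ^γ as A-modules. -/

import Mathlib

open scoped TensorProduct

/-- A cell datum (Graham–Lehrer cellular basis, in the weak form of Definition 2.1):
an `R`-linear algebra involution `star`, a poset `Γ`, finite index sets `T γ`, and a basis
`c γ s t` satisfying the cellular multiplication rule (modulo the span `Ā^γ` of the basis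
elements `c μ u w` with `μ > γ`) and the cellular involution rule. -/
structure CellDatum (R : Type*) [CommRing R] (A : Type*) [Ring A] [Algebra R A]
    (Γ : Type*) [PartialOrder Γ] (T : Γ → Type*) [∀ γ, Fintype (T γ)] where
  star : A →ₗ[R] A
  star_mul : ∀ a b : A, star (a * b) = star b * star a
  star_star : ∀ a : A, star (star a) = a
  c : (γ : Γ) → T γ → T γ → A
  indep : LinearIndependent R fun p : Σ γ : Γ, T γ × T γ => c p.1 p.2.1 p.2.2
  span_top : Submodule.span R (Set.range fun p : Σ γ : Γ, T γ × T γ => c p.1 p.2.1 p.2.2) = ⊤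
  mult : ∀ (γ : Γ) (s : T γ) (a : A), ∃ r : T γ → R, ∀ t : T γ,
    a * c γ s t - ∑ v : T γ, r v • c γ v t ∈
      Submodule.span R {x : A | ∃ μ : Γ, γ < μ ∧ ∃ u w : T μ, x = c μ u w}
  star_c : ∀ (γ : Γ) (s t : T γ),
    star (c γ s t) - c γ t s ∈
      Submodule.span R {x : A | ∃ μ : Γ, γ < μ ∧ ∃ u w : T μ, x = c μ u w}

namespace CellDatum

variable {R : Type*} [CommRing R] {A : Type*} [Ring A] [Algebra R A]
  {Γ : Type*} [PartialOrder Γ] {T : Γ → Type*} [∀ γ, Fintype (T γ)]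

/-- The ideal `Ā^γ`, spanned by the basis elements `c μ u w` with `μ > γ`. -/
def Abar (D : CellDatum R A Γ T) (γ : Γ) : Submodule R A :=
  Submodule.span R {x : A | ∃ μ : Γ, γ < μ ∧ ∃ u w : T μ, x = D.c μ u w}

/-- The ideal `A^γ`, spanned by the basis elements `c μ u w` with `μ ≥ γ`. -/
def Aup (D : CellDatum R A Γ T) (γ : Γ) : Submodule R A :=
  Submodule.span R {x : A | ∃ μ : Γ, γ ≤ μ ∧ ∃ u w : T μ, x = D.c μ u w}

end CellDatum

/-- `e : T γ → M` exhibits the `A`-module `M` as (a copy of) the cell module `Δ^γ`: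
`e` is an `R`-basis of `M`, and `A` acts on it by the structure coefficients of the cellular
basis. -/
def IsCellModule {R : Type*} [CommRing R] {A : Type*} [Ring A] [Algebra R A]
    {Γ : Type*} [PartialOrder Γ] {T : Γ → Type*} [∀ γ, Fintype (T γ)]
    (D : CellDatum R A Γ T) (γ : Γ) (M : Type*) [AddCommGroup M] [Module R M]
    [Module A M] [IsScalarTower R A M] (e : T γ → M) : Prop :=
  LinearIndependent R e ∧ Submodule.span R (Set.range e) = ⊤ ∧
    ∀ (a : A) (s : T γ) (r : T γ → R),
      (∀ t : T γ, a * D.c γ s t - ∑ v : T γ, r v • D.c γ v t ∈ D.Abar γ) →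
      a • e s = ∑ v : T γ, r v • e v

namespace CellDatum

variable {R : Type*} [CommRing R] {A : Type*} [Ring A] [Algebra R A]
  {Γ : Type*} [PartialOrder Γ] {T : Γ → Type*} [∀ γ, Fintype (T γ)]
  (D : CellDatum R A Γ T)

lemma c_mem_Abar {γ μ : Γ} (h : γ < μ) (u w : T μ) : D.c μ u w ∈ D.Abar γ :=
  Submodule.subset_span ⟨μ, h, u, w, rfl⟩

lemma c_mem_Aup {γ μ : Γ} (h : γ ≤ μ) (u w : T μ) : D.c μ u w ∈ D.Aup γ :=
  Submodule.subset_span ⟨μ, h, u, w, rfl⟩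

lemma Abar_le_Abar {γ μ : Γ} (h : γ ≤ μ) : D.Abar μ ≤ D.Abar γ :=
  Submodule.span_le.2 (by rintro x ⟨ν, hν, u, w, rfl⟩; exact D.c_mem_Abar (lt_of_le_of_lt h hν) u w)

lemma Abar_le_Aup {γ μ : Γ} (h : γ ≤ μ) : D.Abar μ ≤ D.Aup γ :=
  Submodule.span_le.2 (by rintro x ⟨ν, hν, u, w, rfl⟩; exact D.c_mem_Aup (h.trans hν.le) u w)

lemma mul_mem_Abar {γ : Γ} (a : A) {x : A} (hx : x ∈ D.Abar γ) : a * x ∈ D.Abar γ := by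
  induction hx using Submodule.span_induction with
  | mem x hx =>
    obtain ⟨μ, hμ, u, w, rfl⟩ := hx
    obtain ⟨rv, hrv⟩ := D.mult μ u a
    have h1 : a * D.c μ u w - ∑ v : T μ, rv v • D.c μ v w ∈ D.Abar γ :=
      D.Abar_le_Abar hμ.le (hrv w)
    have h2 : ∑ v : T μ, rv v • D.c μ v w ∈ D.Abar γ :=
      Submodule.sum_mem _ fun v _ => Submodule.smul_mem _ _ (D.c_mem_Abar hμ v w)
    simpa using add_mem h1 h2
  | zero => simpa using (D.Abar γ).zero_mem
  | add x y hx hy ihx ihy => simpa [mul_add] using add_mem ihx ihy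
  | smul r x hx ih => simpa [mul_smul_comm] using Submodule.smul_mem _ r ih

lemma mul_mem_Aup {γ : Γ} (a : A) {x : A} (hx : x ∈ D.Aup γ) : a * x ∈ D.Aup γ := by
  induction hx using Submodule.span_induction with
  | mem x hx =>
    obtain ⟨μ, hμ, u, w, rfl⟩ := hx
    obtain ⟨rv, hrv⟩ := D.mult μ u a
    have h1 : a * D.c μ u w - ∑ v : T μ, rv v • D.c μ v w ∈ D.Aup γ :=
      D.Abar_le_Aup hμ (hrv w)
    have h2 : ∑ v : T μ, rv v • D.c μ v w ∈ D.Aup γ :=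
      Submodule.sum_mem _ fun v _ => Submodule.smul_mem _ _ (D.c_mem_Aup hμ v w)
    simpa using add_mem h1 h2
  | zero => simpa using (D.Aup γ).zero_mem
  | add x y hx hy ihx ihy => simpa [mul_add] using add_mem ihx ihy
  | smul r x hx ih => simpa [mul_smul_comm] using Submodule.smul_mem _ r ih

lemma star_mem_Abar {γ : Γ} {x : A} (hx : x ∈ D.Abar γ) : D.star x ∈ D.Abar γ := by
  induction hx using Submodule.span_induction with
  | mem x hx =>
    obtain ⟨μ, hμ, u, w, rfl⟩ := hx
    have h1 : D.star (D.c μ u w) - D.c μ w u ∈ D.Abar γ := D.Abar_le_Abar hμ.le (D.star_c μ u w)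
    simpa using add_mem h1 (D.c_mem_Abar hμ w u)
  | zero => simpa using (D.Abar γ).zero_mem
  | add x y hx hy ihx ihy => simpa [map_add] using add_mem ihx ihy
  | smul r x hx ih => simpa [map_smul] using Submodule.smul_mem _ r ih

lemma star_mem_Aup {γ : Γ} {x : A} (hx : x ∈ D.Aup γ) : D.star x ∈ D.Aup γ := by
  induction hx using Submodule.span_induction with
  | mem x hx =>
    obtain ⟨μ, hμ, u, w, rfl⟩ := hx
    have h1 : D.star (D.c μ u w) - D.c μ w u ∈ D.Aup γ := D.Abar_le_Aup hμ (D.star_c μ u w)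
    simpa using add_mem h1 (D.c_mem_Aup hμ w u)
  | zero => simpa using (D.Aup γ).zero_mem
  | add x y hx hy ihx ihy => simpa [map_add] using add_mem ihx ihy
  | smul r x hx ih => simpa [map_smul] using Submodule.smul_mem _ r ih

lemma mem_Abar_mul {γ : Γ} {x : A} (hx : x ∈ D.Abar γ) (b : A) : x * b ∈ D.Abar γ := by
  have : D.star (D.star b * D.star x) ∈ D.Abar γ :=
    D.star_mem_Abar (D.mul_mem_Abar _ (D.star_mem_Abar hx))
  rwa [D.star_mul, D.star_star, D.star_star] at this

lemma mem_Aup_mul {γ : Γ} {x : A} (hx : x ∈ D.Aup γ) (b : A) : x * b ∈ D.Aup γ := by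
  have : D.star (D.star b * D.star x) ∈ D.Aup γ :=
    D.star_mem_Aup (D.mul_mem_Aup _ (D.star_mem_Aup hx))
  rwa [D.star_mul, D.star_star, D.star_star] at this

end CellDatum

namespace CellDatum

variable {R : Type*} [CommRing R] {A : Type*} [Ring A] [Algebra R A]
  {Γ : Type*} [PartialOrder Γ] {T : Γ → Type*} [∀ γ, Fintype (T γ)]
  (D : CellDatum R A Γ T)

lemma key {γ : Γ} {M : Type*} [AddCommGroup M] [Module R M] [Module A M]
    [IsScalarTower R A M] {e : T γ → M} (hM : IsCellModule D γ M e)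
    (B : Module.Basis (T γ) R M) (hB : ∀ s, B s = e s) (a : A) (n : M) (t : T γ) :
    a * (∑ s, B.repr n s • D.c γ s t) - ∑ s, B.repr (a • n) s • D.c γ s t ∈ D.Abar γ := by
  set ρ : T γ → T γ → R := fun s => (D.mult γ s a).choose with hρdef
  have hρ : ∀ s t, a * D.c γ s t - ∑ v, ρ s v • D.c γ v t ∈ D.Abar γ :=
    fun s => (D.mult γ s a).choose_spec
  have hact : ∀ s, a • e s = ∑ v, ρ s v • e v := fun s => hM.2.2 a s (ρ s) (hρ s)
  have hsum : ∀ x : M, ∑ s, B.repr x s • e s = x := by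
    intro x; simp_rw [← hB]; exact B.sum_repr x
  have hn : a • n = ∑ v, (∑ s, B.repr n s * ρ s v) • e v := by
    calc a • n = a • ∑ s, B.repr n s • e s := by rw [hsum]
    _ = ∑ s, B.repr n s • (a • e s) := by
        rw [Finset.smul_sum]; exact Finset.sum_congr rfl fun s _ => smul_comm _ _ _
    _ = ∑ s, B.repr n s • ∑ v, ρ s v • e v := by simp_rw [hact]
    _ = ∑ s, ∑ v, (B.repr n s * ρ s v) • e v := by simp_rw [Finset.smul_sum, smul_smul]
    _ = ∑ v, ∑ s, (B.repr n s * ρ s v) • e v := Finset.sum_comm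
    _ = ∑ v, (∑ s, B.repr n s * ρ s v) • e v := by simp_rw [Finset.sum_smul]
  have hrepr : ∀ v, B.repr (a • n) v = ∑ s, B.repr n s * ρ s v := by
    intro v
    rw [hn]
    simp_rw [map_sum, map_smul, ← hB, B.repr_self]
    classical
    simp [Finsupp.single_apply]
  have hkey : a * (∑ s, B.repr n s • D.c γ s t) - ∑ s, B.repr (a • n) s • D.c γ s t
      = ∑ s, B.repr n s • (a * D.c γ s t - ∑ v, ρ s v • D.c γ v t) := by
    simp_rw [smul_sub, Finset.sum_sub_distrib, Finset.mul_sum, mul_smul_comm, hrepr,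
      Finset.sum_smul, Finset.smul_sum, smul_smul]
    rw [Finset.sum_comm]
  rw [hkey]
  exact Submodule.sum_mem _ fun s _ => Submodule.smul_mem _ _ (hρ s t)

end CellDatum

namespace CellDatum

variable {R : Type*} [CommRing R] {A : Type*} [Ring A] [Algebra R A]
  {Γ : Type*} [PartialOrder Γ] {T : Γ → Type*} [∀ γ, Fintype (T γ)]
  (D : CellDatum R A Γ T)

lemma forward [IsDomain R] {γ : Γ} {M : Type*} [AddCommGroup M] [Module R M] [Module A M]
    [IsScalarTower R A M] {e : T γ → M} (hM : IsCellModule D γ M e)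
    (hcyc : ∃ m : M, Submodule.span A {m} = ⊤) :
    ∃ y ∈ D.Aup γ,
      (D.star y - y ∈ D.Abar γ) ∧
      (D.Aup γ = Submodule.span R {x : A | ∃ a b : A, x = a * y * b} ⊔ D.Abar γ) ∧
      (∃ χ : M →ₗ[R] (A ⧸ D.Abar γ),
        Function.Injective χ ∧
        LinearMap.range χ =
          Submodule.map (D.Abar γ).mkQ
            (Submodule.span R {z : A | ∃ a : A, z = a * y} ⊔ D.Abar γ) ∧
        ∀ (a : A) (m : M) (x : A),
          Submodule.Quotient.mk x = χ m →
          χ (a • m) = Submodule.Quotient.mk (a * x)) := by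
  classical
  obtain ⟨m, hm⟩ := hcyc
  set B : Module.Basis (T γ) R M := Module.Basis.mk hM.1 (le_of_eq hM.2.1.symm) with hBdef
  have hB : ∀ s, B s = e s := fun s => Module.Basis.mk_apply _ _ s
  set V : T γ → M →ₗ[R] A := fun t => ∑ s, (B.coord s).smulRight (D.c γ s t) with hVdef
  have hV : ∀ t n, V t n = ∑ s, B.repr n s • D.c γ s t := by
    intro t n
    simp [hVdef, LinearMap.sum_apply, LinearMap.smulRight_apply, Module.Basis.coord_apply]
  set W : M →ₗ[R] A := ∑ t, B.repr m t • V t with hWdef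
  have hW : ∀ n, W n = ∑ t, B.repr m t • V t n := by
    intro n
    simp [hWdef, LinearMap.sum_apply, LinearMap.smul_apply]
  have keyV : ∀ (a : A) (n : M) (t : T γ), a * V t n - V t (a • n) ∈ D.Abar γ := by
    intro a n t
    rw [hV, hV]
    exact D.key hM B hB a n t
  have keyW : ∀ (a : A) (n : M), a * W n - W (a • n) ∈ D.Abar γ := by
    intro a n
    have heq : a * W n - W (a • n) = ∑ t, B.repr m t • (a * V t n - V t (a • n)) := by
      rw [hW, hW, Finset.mul_sum, ← Finset.sum_sub_distrib]
      simp_rw [mul_smul_comm, smul_sub]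
    rw [heq]
    exact Submodule.sum_mem _ fun t _ => Submodule.smul_mem _ _ (keyV a n t)
  have hVe : ∀ s t, V t (e s) = D.c γ s t := by
    intro s t
    rw [hV]
    simp_rw [← hB, B.repr_self]
    simp [Finsupp.single_apply, ite_smul]
  have hWe : ∀ t', W (e t') = ∑ u, B.repr m u • D.c γ t' u := by
    intro t'
    rw [hW]
    simp_rw [hVe]
  have hyAup : W m ∈ D.Aup γ := by
    rw [hW]
    refine Submodule.sum_mem _ fun t _ => Submodule.smul_mem _ _ ?_
    rw [hV]
    exact Submodule.sum_mem _ fun s _ => Submodule.smul_mem _ _ (D.c_mem_Aup le_rfl s t)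
  have hWm : W m = ∑ t, ∑ s, (B.repr m t * B.repr m s) • D.c γ s t := by
    rw [hW]; simp_rw [hV, Finset.smul_sum, smul_smul]
  -- (a)
  have hstar : D.star (W m) - W m ∈ D.Abar γ := by
    have h1 : D.star (W m) - ∑ t, ∑ s, (B.repr m t * B.repr m s) • D.c γ t s ∈ D.Abar γ := by
      have heq : D.star (W m) - ∑ t, ∑ s, (B.repr m t * B.repr m s) • D.c γ t s
          = ∑ t, ∑ s, (B.repr m t * B.repr m s) • (D.star (D.c γ s t) - D.c γ t s) := by
        rw [hWm, map_sum, ← Finset.sum_sub_distrib]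
        simp_rw [map_sum, map_smul, ← Finset.sum_sub_distrib, smul_sub]
      rw [heq]
      exact Submodule.sum_mem _ fun t _ => Submodule.sum_mem _ fun s _ =>
        Submodule.smul_mem _ _ (D.star_c γ s t)
    have h2 : ∑ t, ∑ s, (B.repr m t * B.repr m s) • D.c γ t s = W m := by
      rw [Finset.sum_comm, hWm]
      exact Finset.sum_congr rfl fun t _ => Finset.sum_congr rfl fun s _ => by rw [mul_comm]
    rwa [h2] at h1
  -- generators
  have ha : ∀ s : T γ, ∃ a : A, a • m = e s := fun s =>
    Submodule.mem_span_singleton.1 (by rw [hm]; trivial)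
  choose aa haa using ha
  have h1 : ∀ s t, aa s * V t m - D.c γ s t ∈ D.Abar γ := by
    intro s t
    have := keyV (aa s) m t
    rwa [haa, hVe] at this
  have h2 : ∀ t, aa t * W m - ∑ u, B.repr m u • D.c γ t u ∈ D.Abar γ := by
    intro t
    have := keyW (aa t) m
    rwa [haa, hWe] at this
  have h3 : ∀ t, W m * D.star (aa t) - V t m ∈ D.Abar γ := by
    intro t
    have h2' := D.star_mem_Abar (h2 t)
    rw [map_sub, D.star_mul] at h2'
    have h4 : D.star (∑ u, B.repr m u • D.c γ t u) - V t m ∈ D.Abar γ := by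
      have heq : D.star (∑ u, B.repr m u • D.c γ t u) - V t m
          = ∑ u, B.repr m u • (D.star (D.c γ t u) - D.c γ u t) := by
        rw [map_sum, hV, ← Finset.sum_sub_distrib]
        simp_rw [map_smul, smul_sub]
      rw [heq]
      exact Submodule.sum_mem _ fun u _ => Submodule.smul_mem _ _ (D.star_c γ t u)
    have h5 : W m * D.star (aa t) - D.star (W m) * D.star (aa t) ∈ D.Abar γ := by
      have h5' := D.mem_Abar_mul (neg_mem hstar) (D.star (aa t))
      rwa [neg_sub, sub_mul] at h5'
    have := add_mem (add_mem h5 h2') h4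
    convert this using 1
    abel
  have hgen : ∀ s t, D.c γ s t - aa s * (W m) * D.star (aa t) ∈ D.Abar γ := by
    intro s t
    have h6 : aa s * (W m * D.star (aa t)) - aa s * V t m ∈ D.Abar γ := by
      have := D.mul_mem_Abar (aa s) (h3 t)
      rwa [mul_sub] at this
    have h7 : aa s * (W m * D.star (aa t)) - D.c γ s t ∈ D.Abar γ := by
      have := add_mem h6 (h1 s t)
      convert this using 1
      abel
    have := neg_mem h7
    rwa [neg_sub, ← mul_assoc] at this
  -- (b)
  have hbsup : D.Aup γ
      = Submodule.span R {x : A | ∃ a b : A, x = a * W m * b} ⊔ D.Abar γ := by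
    apply le_antisymm
    · refine Submodule.span_le.2 ?_
      rintro x ⟨μ, hμ, u, w, rfl⟩
      rcases eq_or_lt_of_le hμ with rfl | h
      · have hms : aa u * W m * D.star (aa w) ∈
            Submodule.span R {x : A | ∃ a b : A, x = a * W m * b} ⊔ D.Abar γ :=
          Submodule.mem_sup_left (Submodule.subset_span ⟨aa u, D.star (aa w), rfl⟩)
        have := add_mem hms (Submodule.mem_sup_right (hgen u w))
        simpa using this
      · exact Submodule.mem_sup_right (D.c_mem_Abar h u w)
    · refine sup_le (Submodule.span_le.2 ?_) (D.Abar_le_Aup le_rfl)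
      rintro x ⟨a, b, rfl⟩
      exact D.mem_Aup_mul (D.mul_mem_Aup a hyAup) b
  -- (c)
  set χ : M →ₗ[R] A ⧸ D.Abar γ := (D.Abar γ).mkQ.comp W with hχdef
  have hχ : ∀ n, χ n = Submodule.Quotient.mk (W n) := fun n => rfl
  have hcomm : ∀ (a : A) (n : M) (x : A), Submodule.Quotient.mk x = χ n →
      χ (a • n) = Submodule.Quotient.mk (a * x) := by
    intro a n x hx
    rw [hχ] at hx ⊢
    rw [Submodule.Quotient.eq] at hx ⊢
    have e1 := neg_mem (keyW a n)
    rw [neg_sub] at e1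
    have e2 := D.mul_mem_Abar a (neg_mem hx)
    rw [neg_sub, mul_sub] at e2
    have := add_mem e1 e2
    convert this using 1
    abel
  have hinj : Function.Injective χ := by
    have hker : ∀ n : M, W n ∈ D.Abar γ → n = 0 := by
      intro n hn
      by_cases hr : ∀ t, B.repr m t = 0
      · have hm0 : m = 0 := by
          have := B.sum_repr m
          simp only [hr, zero_smul, Finset.sum_const_zero] at this
          exact this.symm
        rw [hm0, Submodule.span_zero_singleton] at hm
        have : n ∈ (⊥ : Submodule A M) := hm ▸ Submodule.mem_top
        simpa using this
      · push_neg at hr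
        obtain ⟨t0, ht0⟩ := hr
        set v : (Σ γ : Γ, T γ × T γ) → A := fun p => D.c p.1 p.2.1 p.2.2 with hvdef
        have hWspan : W n ∈ Submodule.span R (v '' {p | p.1 = γ}) := by
          rw [hW]
          refine Submodule.sum_mem _ fun t _ => Submodule.smul_mem _ _ ?_
          rw [hV]
          exact Submodule.sum_mem _ fun s _ => Submodule.smul_mem _ _
            (Submodule.subset_span ⟨⟨γ, s, t⟩, rfl, rfl⟩)
        have hAbarle : D.Abar γ ≤ Submodule.span R (v '' {p | γ < p.1}) := by
          refine Submodule.span_le.2 ?_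
          rintro x ⟨μ, hμ, u, w, rfl⟩
          exact Submodule.subset_span ⟨⟨μ, u, w⟩, hμ, rfl⟩
        have hdisj := D.indep.disjoint_span_image
          (s := {p | p.1 = γ}) (t := {p | γ < p.1})
          (by
            rw [Set.disjoint_left]
            rintro p (hp : p.1 = γ) (hp' : γ < p.1)
            rw [hp] at hp'
            exact lt_irrefl _ hp')
        have hW0 : W n = 0 :=
          Submodule.disjoint_def.1 hdisj _ hWspan (hAbarle hn)
        have hWn : W n = ∑ p : T γ × T γ,
            (B.repr m p.2 * B.repr n p.1) • v ⟨γ, p.1, p.2⟩ := by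
          rw [Fintype.sum_prod_type, hW, Finset.sum_comm]
          simp_rw [hV, Finset.smul_sum, smul_smul]; rfl
        have hli : LinearIndependent R fun p : T γ × T γ => v ⟨γ, p.1, p.2⟩ :=
          D.indep.comp (fun p : T γ × T γ => ⟨γ, p.1, p.2⟩)
            (by
              intro p q h
              simp only [Sigma.mk.inj_iff, heq_eq_eq, Prod.mk.injEq, true_and] at h
              exact Prod.ext h.1 h.2)
        have hcoef := Fintype.linearIndependent_iff.1 hli
          (fun p => B.repr m p.2 * B.repr n p.1) (by rw [← hWn, hW0])
        have hzero : ∀ s, B.repr n s = 0 := by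
          intro s
          have := hcoef (s, t0)
          rcases mul_eq_zero.1 this with h | h
          · exact absurd h ht0
          · exact h
        have : B.repr n = 0 := Finsupp.ext hzero
        exact B.repr.map_eq_zero_iff.1 this
    intro n1 n2 h
    have : W (n1 - n2) ∈ D.Abar γ := by
      have : χ (n1 - n2) = 0 := by rw [map_sub, h, sub_self]
      rw [hχ] at this
      rwa [← Submodule.Quotient.mk_eq_zero]
    have := hker _ this
    exact sub_eq_zero.1 this
  have hrange : LinearMap.range χ = Submodule.map (D.Abar γ).mkQ
      (Submodule.span R {z : A | ∃ a : A, z = a * W m} ⊔ D.Abar γ) := by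
    apply le_antisymm
    · rintro _ ⟨n, rfl⟩
      obtain ⟨a, han⟩ := Submodule.mem_span_singleton.1
        (show n ∈ Submodule.span A {m} by rw [hm]; trivial)
      refine ⟨W n, ?_, rfl⟩
      have h8 : W n - a * W m ∈ D.Abar γ := by
        have := neg_mem (keyW a m)
        rwa [neg_sub, han] at this
      have hms : a * W m ∈
          Submodule.span R {z : A | ∃ a : A, z = a * W m} ⊔ D.Abar γ :=
        Submodule.mem_sup_left (Submodule.subset_span ⟨a, rfl⟩)
      have := add_mem hms (Submodule.mem_sup_right h8)
      simpa using this
    · rintro _ ⟨z, hz, rfl⟩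
      obtain ⟨z1, hz1, z2, hz2, rfl⟩ := Submodule.mem_sup.1 hz
      have hz2' : (D.Abar γ).mkQ z2 = 0 := (Submodule.Quotient.mk_eq_zero _).2 hz2
      have heq : (D.Abar γ).mkQ (z1 + z2) = (D.Abar γ).mkQ z1 := by
        rw [map_add, hz2', add_zero]
      rw [heq]
      clear heq hz2' hz2 hz
      induction hz1 using Submodule.span_induction with
      | mem x hx =>
        obtain ⟨a, rfl⟩ := hx
        refine ⟨a • m, ?_⟩
        rw [hχ]
        show Submodule.Quotient.mk (W (a • m)) = Submodule.Quotient.mk (a * W m)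
        rw [Submodule.Quotient.eq]
        have := neg_mem (keyW a m)
        rwa [neg_sub] at this
      | zero => exact ⟨0, by simp⟩
      | add x y hx hy ihx ihy =>
        obtain ⟨nx, hnx⟩ := ihx
        obtain ⟨ny, hny⟩ := ihy
        exact ⟨nx + ny, by rw [map_add, hnx, hny, map_add]⟩
      | smul r x hx ih =>
        obtain ⟨nx, hnx⟩ := ih
        exact ⟨r • nx, by rw [map_smul, hnx, map_smul]⟩
  exact ⟨W m, hyAup, hstar, hbsup, χ, hinj, hrange, hcomm⟩

end CellDatum

/-- A cellular algebra `A` is cyclic cellular (every cell module is a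
cyclic `A`-module) if and only if for each `γ ∈ Γ` there exists `y_γ ∈ A^γ` with
(a) `y_γ ≡ y_γ* mod Ā^γ`, (b) `A^γ = A y_γ A + Ā^γ`, and (c) `(A y_γ + Ā^γ)/Ā^γ ≅ Δ^γ` as
`A`-modules.  Condition (c) is expressed by an injective `R`-linear map
`χ : Δ^γ → A/Ā^γ` whose range is the image of `A y_γ + Ā^γ` and which intertwines the
`A`-actions. -/
theorem stmt_2 {R : Type*} [CommRing R] [IsDomain R] {A : Type*} [Ring A] [Algebra R A]
    {Γ : Type*} [PartialOrder Γ] {T : Γ → Type*} [∀ γ, Fintype (T γ)]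
    (D : CellDatum R A Γ T)
    (M : Γ → Type*) [∀ γ, AddCommGroup (M γ)] [∀ γ, Module R (M γ)]
    [∀ γ, Module A (M γ)] [∀ γ, IsScalarTower R A (M γ)]
    (e : ∀ γ, T γ → M γ) (hM : ∀ γ, IsCellModule D γ (M γ) (e γ)) :
    (∀ γ, ∃ m : M γ, Submodule.span A {m} = ⊤) ↔
    (∀ γ : Γ, ∃ y ∈ D.Aup γ,
      (D.star y - y ∈ D.Abar γ) ∧
      (D.Aup γ = Submodule.span R {x : A | ∃ a b : A, x = a * y * b} ⊔ D.Abar γ) ∧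
      (∃ χ : M γ →ₗ[R] (A ⧸ D.Abar γ),
        Function.Injective χ ∧
        LinearMap.range χ =
          Submodule.map (D.Abar γ).mkQ
            (Submodule.span R {z : A | ∃ a : A, z = a * y} ⊔ D.Abar γ) ∧
        ∀ (a : A) (m : M γ) (x : A),
          Submodule.Quotient.mk x = χ m →
          χ (a • m) = Submodule.Quotient.mk (a * x))) := by
  constructor
  · intro h γ
    exact D.forward (hM γ) (h γ)
  · intro h γ
    obtain ⟨y, _, _, _, χ, hinj, hrange, hcomm⟩ := h γ
    have hymem : (D.Abar γ).mkQ y ∈ Submodule.map (D.Abar γ).mkQ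
        (Submodule.span R {z : A | ∃ a : A, z = a * y} ⊔ D.Abar γ) :=
      ⟨y, Submodule.mem_sup_left (Submodule.subset_span ⟨1, (one_mul y).symm⟩), rfl⟩
    rw [← hrange] at hymem
    obtain ⟨m0, hm0⟩ := hymem
    refine ⟨m0, eq_top_iff.2 fun n _ => ?_⟩
    have hn : χ n ∈ LinearMap.range χ := ⟨n, rfl⟩
    rw [hrange] at hn
    obtain ⟨z, hz, hzn⟩ := hn
    obtain ⟨z1, hz1, z2, hz2, rfl⟩ := Submodule.mem_sup.1 hz
    have claim : ∀ w ∈ Submodule.span R {z : A | ∃ a : A, z = a * y},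
        ∃ n' ∈ Submodule.span A {m0}, χ n' = (D.Abar γ).mkQ w := by
      intro w hw
      induction hw using Submodule.span_induction with
      | mem x hx =>
        obtain ⟨a, rfl⟩ := hx
        exact ⟨a • m0, Submodule.smul_mem _ _ (Submodule.mem_span_singleton_self m0),
          hcomm a m0 y hm0.symm⟩
      | zero => exact ⟨0, Submodule.zero_mem _, by simp⟩
      | add x x' hx hx' ihx ihx' =>
        obtain ⟨nx, hnx, hχx⟩ := ihx
        obtain ⟨nx', hnx', hχx'⟩ := ihx'
        exact ⟨nx + nx', Submodule.add_mem _ hnx hnx', by rw [map_add, hχx, hχx', map_add]⟩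
      | smul r x hx ih =>
        obtain ⟨nx, hnx, hχx⟩ := ih
        refine ⟨r • nx, ?_, by rw [map_smul, hχx, map_smul]⟩
        rw [← algebraMap_smul A r nx]
        exact Submodule.smul_mem _ _ hnx
    obtain ⟨n', hn', hχ'⟩ := claim z1 hz1
    have hz2' : (D.Abar γ).mkQ z2 = 0 := (Submodule.Quotient.mk_eq_zero _).2 hz2
    have : χ n' = χ n := by rw [hχ', ← hzn, map_add, hz2', add_zero]
    exact hinj this ▸ hn'
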